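/- Let F be a field, 1 ≤ b ≤ k, n ≥ 1, U ∈ F^{k×b}, V ∈ F^{k×n}, and suppose (U,V) is MDSb(1), i.e. for every σ ∈ {0,…,b} and A ⊆ {1,…,n}, dim(U_{≤σ} + V_A) = min(σ + |A|, k). Then for every ℓ ≥ 1 and every proper configuration (σ_1,A_1),…,(σ_ℓ,A_ℓ) (σ_i ∈ {0,…,b}, A_i ⊆ {1,…,n}, σ_i + |A_i| ≤ k), we have dim(⋂_{i=1}^ℓ (U_{≤σ_i} + V_{A_i})) ≥ gid_k((σ_i,A_i)_i), where gid_k((σ_i,A_i)_i) is the dimension of the corresponding intersection ⋂_{i=1}^ℓ (W_{≤σ_i} + W'_{A_i}) for generic matrices W, W'. -/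

import Mathlib

open Finset Matrix

noncomputable section

/-- The intersection `⋂_{j ∈ p} A j`, as a `Finset (Fin n)`. -/
def interSet {ℓ n : ℕ} (A : Fin ℓ → Finset (Fin n)) (p : Finset (Fin ℓ)) : Finset (Fin n) :=
  Finset.univ.filter fun x => ∀ j ∈ p, x ∈ A j

/-- The dimension-`m` null intersection property: for every partition of `{1,…,ℓ}`
(presented as a `Finpartition` of `Finset.univ : Finset (Fin ℓ)`) into nonempty parts
`P_1,…,P_s`, we have `Σ_i |⋂_{j ∈ P_i} A_j| ≤ (s-1)·m`. -/
def NullInter {ℓ n : ℕ} (m : ℕ) (A : Fin ℓ → Finset (Fin n)) : Prop :=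
  ∀ P : Finpartition (Finset.univ : Finset (Fin ℓ)),
    ∑ p ∈ P.parts, (interSet A p).card ≤ (P.parts.card - 1) * m

/-- Span of the columns of `M` indexed by `A`. -/
def colSpan {K : Type*} [Field K] {k n : ℕ} (M : Matrix (Fin k) (Fin n) K)
    (A : Finset (Fin n)) : Submodule K (Fin k → K) :=
  Submodule.span K ((fun j i => M i j) '' (A : Set (Fin n)))

/-- Span of the first `σ` columns of `M`. -/
def colSpanLT {K : Type*} [Field K] {k b : ℕ} (M : Matrix (Fin k) (Fin b) K)
    (σ : ℕ) : Submodule K (Fin k → K) :=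
  Submodule.span K ((fun j i => M i j) '' {j : Fin b | (j : ℕ) < σ})

/-- The minimum of `σ` over the set `p` (for nonempty `p`, this is `min_{j ∈ p} σ j`). -/
def partMin {ℓ : ℕ} (σ : Fin ℓ → ℕ) (p : Finset (Fin ℓ)) : ℕ :=
  sInf (σ '' (p : Set (Fin ℓ)))

/-- The generic intersection dimension `gid_m((σ_i, A_i)_i)`: the maximum over all
partitions of `{1,…,ℓ}` into nonempty parts `P_1,…,P_s` of
`-m(s-1) + Σ_i (min_{j ∈ P_i} σ_j + |⋂_{j ∈ P_i} A_j|)`. -/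
def gid {ℓ n : ℕ} (m : ℕ) (σ : Fin ℓ → ℕ) (A : Fin ℓ → Finset (Fin n)) : ℤ :=
  sSup { v : ℤ | ∃ P : Finpartition (Finset.univ : Finset (Fin ℓ)),
    v = -(m : ℤ) * ((P.parts.card : ℤ) - 1)
      + ∑ p ∈ P.parts, ((partMin σ p : ℤ) + ((interSet A p).card : ℤ)) }

lemma colSpan_mono' {F : Type*} [Field F] {k n : ℕ} (V : Matrix (Fin k) (Fin n) F)
    {A B : Finset (Fin n)} (h : A ⊆ B) : colSpan V A ≤ colSpan V B :=
  Submodule.span_mono (Set.image_mono (by exact_mod_cast h))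

lemma colSpanLT_mono' {F : Type*} [Field F] {k b : ℕ} (U : Matrix (Fin k) (Fin b) F)
    {σ τ : ℕ} (h : σ ≤ τ) : colSpanLT U σ ≤ colSpanLT U τ :=
  Submodule.span_mono (Set.image_mono (fun j hj => lt_of_lt_of_le hj h))

lemma finrank_inf_ge' {F : Type*} [Field F] {k : ℕ} (X Y : Submodule F (Fin k → F)) :
    (Module.finrank F X : ℤ) + Module.finrank F Y - k ≤
      Module.finrank F ↥(X ⊓ Y) := by
  have h := Submodule.finrank_sup_add_finrank_inf_eq X Y
  have h2 : Module.finrank F ↥(X ⊔ Y) ≤ k := by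
    have h3 := Submodule.finrank_le (X ⊔ Y)
    have h4 : Module.finrank F (Fin k → F) = k := by
      simp [Module.finrank_pi]
    omega
  omega

lemma finrank_biInf_ge' {F : Type*} [Field F] {k : ℕ} {ι : Type*} [DecidableEq ι]
    (s : Finset ι) (hs : s.Nonempty) (W : ι → Submodule F (Fin k → F)) :
    (∑ p ∈ s, (Module.finrank F (W p) : ℤ)) - ((s.card : ℤ) - 1) * k ≤
      Module.finrank F ↥(⨅ p ∈ s, W p) := by
  induction s using Finset.cons_induction with
  | empty => exact absurd hs (by simp)
  | cons a s ha ih =>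
    rcases s.eq_empty_or_nonempty with rfl | hs'
    · have h1 : (⨅ p ∈ Finset.cons a ∅ ha, W p) = W a := by
        simp
      rw [h1]
      simp
    · have hrec := ih hs'
      have hbi : (⨅ p ∈ Finset.cons a s ha, W p) = W a ⊓ ⨅ p ∈ s, W p := by
        simp [Finset.cons_eq_insert, Finset.mem_insert, iInf_or, iInf_inf_eq, iInf_iInf_eq_left]
      rw [hbi]
      have h1 := finrank_inf_ge' (W a) (⨅ p ∈ s, W p)
      rw [Finset.sum_cons, Finset.card_cons]
      push_cast
      linarith

/-- For an `MDSb(1)` pair `(U, V)`, the dimension of every proper-configuration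
intersection is at least the generic value `gid_k`. -/
theorem MDSb_one_intersection_ge_gid
    (F : Type*) [Field F] (b k n : ℕ) (hb : 1 ≤ b) (hbk : b ≤ k) (hn : 1 ≤ n)
    (U : Matrix (Fin k) (Fin b) F) (V : Matrix (Fin k) (Fin n) F)
    (hMDSb1 : ∀ σ : ℕ, σ ≤ b → ∀ A : Finset (Fin n),
      Module.finrank F ↥(colSpanLT U σ ⊔ colSpan V A) = min (σ + A.card) k) :
    ∀ ℓ : ℕ, 1 ≤ ℓ → ∀ (σ : Fin ℓ → ℕ) (A : Fin ℓ → Finset (Fin n)),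
      (∀ i, σ i ≤ b) → (∀ i, σ i + (A i).card ≤ k) →
      gid k σ A ≤
        (Module.finrank F ↥(⨅ i, colSpanLT U (σ i) ⊔ colSpan V (A i)) : ℤ) := by
  intro ℓ hℓ σ A hσb hproper
  have hne : Nonempty (Fin ℓ) := ⟨⟨0, hℓ⟩⟩
  have huniv : (Finset.univ : Finset (Fin ℓ)) ≠ ⊥ := by
    simpa [Finset.bot_eq_empty] using (Finset.univ_nonempty (α := Fin ℓ)).ne_empty
  apply csSup_le
  · exact ⟨_, ⟨Finpartition.indiscrete huniv, rfl⟩⟩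
  rintro v ⟨P, rfl⟩
  set Y : Finset (Fin ℓ) → Submodule F (Fin k → F) :=
    fun p => colSpanLT U (partMin σ p) ⊔ colSpan V (interSet A p) with hY
  -- facts about parts
  have hpartfacts : ∀ p ∈ P.parts,
      partMin σ p ≤ b ∧ partMin σ p + (interSet A p).card ≤ k := by
    intro p hp
    have hpne : p.Nonempty := P.nonempty_of_mem_parts hp
    have himg : (σ '' (p : Set (Fin ℓ))).Nonempty := by
      obtain ⟨x, hx⟩ := hpne; exact ⟨σ x, ⟨x, hx, rfl⟩⟩
    obtain ⟨j0, hj0, hm⟩ := Nat.sInf_mem himg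
    have hsub : interSet A p ⊆ A j0 := by
      intro x hx
      exact (Finset.mem_filter.mp hx).2 j0 hj0
    have hcard : (interSet A p).card ≤ (A j0).card := Finset.card_le_card hsub
    constructor
    · rw [partMin, ← hm]; exact hσb j0
    · rw [partMin, ← hm]
      have := hproper j0
      omega
  have hrank : ∀ p ∈ P.parts,
      Module.finrank F (Y p) = partMin σ p + (interSet A p).card := by
    intro p hp
    obtain ⟨h1, h2⟩ := hpartfacts p hp
    rw [hY]
    rw [hMDSb1 (partMin σ p) h1 (interSet A p)]
    exact min_eq_left h2
  -- part nonempty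
  have hPne : P.parts.Nonempty := by
    obtain ⟨i⟩ := hne
    obtain ⟨p, hp, _⟩ := P.exists_mem (Finset.mem_univ i)
    exact ⟨p, hp⟩
  -- the inf over parts is below the inf over i
  have hle : (⨅ p ∈ P.parts, Y p) ≤ ⨅ i, colSpanLT U (σ i) ⊔ colSpan V (A i) := by
    apply le_iInf
    intro i
    obtain ⟨p, hp, hip⟩ := P.exists_mem (Finset.mem_univ i)
    refine le_trans (iInf₂_le p hp) ?_
    apply sup_le_sup
    · apply colSpanLT_mono'
      exact Nat.sInf_le ⟨i, hip, rfl⟩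
    · apply colSpan_mono'
      intro x hx
      exact (Finset.mem_filter.mp hx).2 i hip
  have hmono : Module.finrank F ↥(⨅ p ∈ P.parts, Y p) ≤
      Module.finrank F ↥(⨅ i, colSpanLT U (σ i) ⊔ colSpan V (A i)) :=
    Submodule.finrank_mono hle
  have hbnd := finrank_biInf_ge' P.parts hPne Y
  have hsum : ∑ p ∈ P.parts, (Module.finrank F (Y p) : ℤ)
      = ∑ p ∈ P.parts, ((partMin σ p : ℤ) + ((interSet A p).card : ℤ)) := by
    apply Finset.sum_congr rfl
    intro p hp
    rw [hrank p hp]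
    push_cast
    ring
  rw [hsum] at hbnd
  have : (-(k : ℤ)) * ((P.parts.card : ℤ) - 1)
      + ∑ p ∈ P.parts, ((partMin σ p : ℤ) + ((interSet A p).card : ℤ))
      = ∑ p ∈ P.parts, ((partMin σ p : ℤ) + ((interSet A p).card : ℤ))
        - ((P.parts.card : ℤ) - 1) * k := by ring
  rw [this]
  calc _ ≤ (Module.finrank F ↥(⨅ p ∈ P.parts, Y p) : ℤ) := hbnd
    _ ≤ _ := by exact_mod_cast hmono
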